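/- Let G be a finite simple graph whose edges are randomly and independently oriented, with arbitrary orientation probabilities p_e ∈ [0,1] for each edge e. Then for every target set of vertices T, the events {i ⇝ T}, i ∈ V, are positively associated, where {i ⇝ T} is the event that there is a directed path from i to some t ∈ T. -/

import Mathlib

open MeasureTheory ProbabilityTheory
open scoped Classical

/-- A finite family of events `A i` is positively associated under `μ`:
for all bounded measurable monotone `f g : (I → Bool) → ℝ`,
`E[f(X) g(X)] ≥ E[f(X)] E[g(X)]` where `X ω i = true` iff `ω ∈ A i`. -/
def PositivelyAssociated {Ω : Type*} [MeasurableSpace Ω] (μ : Measure Ω)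
    {I : Type*} (A : I → Set Ω) : Prop :=
  ∀ f g : (I → Bool) → ℝ,
    Measurable f → Measurable g →
    (∃ C, ∀ x, |f x| ≤ C) → (∃ C, ∀ x, |g x| ≤ C) →
    Monotone f → Monotone g →
    (∫ ω, f (fun i => decide (ω ∈ A i)) * g (fun i => decide (ω ∈ A i)) ∂μ) ≥
      (∫ ω, f (fun i => decide (ω ∈ A i)) ∂μ) * (∫ ω, g (fun i => decide (ω ∈ A i)) ∂μ)

variable {V : Type*} [Fintype V] [LinearOrder V]

/-- The edge set of `G`, identified with pairs `(i, j)` with `i < j` and `i ~ j`. -/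
def EdgeIdx (G : SimpleGraph V) : Type _ :=
  {e : V × V // e.1 < e.2 ∧ G.Adj e.1 e.2}

noncomputable instance (G : SimpleGraph V) : Fintype (EdgeIdx G) := by
  classical exact (Subtype.fintype _)

instance (G : SimpleGraph V) : MeasurableSpace (EdgeIdx G → Bool) := by infer_instance

/-- The Bernoulli measure on `Bool`: `true` has probability `p`,
`false` has probability `1 - p`. -/
noncomputable def bern (p : ℝ) : Measure Bool :=
  (ENNReal.ofReal p) • Measure.dirac true + (ENNReal.ofReal (1 - p)) • Measure.dirac false

instance (p : ℝ) : IsFiniteMeasure (bern p) := by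
  constructor
  simp only [bern, Measure.add_apply, Measure.smul_apply, smul_eq_mul]
  exact ENNReal.add_lt_top.mpr
    ⟨ENNReal.mul_lt_top ENNReal.ofReal_lt_top (by simp),
     ENNReal.mul_lt_top ENNReal.ofReal_lt_top (by simp)⟩

/-- The random orientation measure on `Ω = EdgeIdx G → Bool`: the coordinates are
independent, and the coordinate of edge `e = (i,j)` (with `i < j`) equals `true`
(edge oriented from `i` to `j`) with probability `p e`. -/
noncomputable def orientationMeasure (G : SimpleGraph V) (p : EdgeIdx G → ℝ) :
    Measure (EdgeIdx G → Bool) :=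
  Measure.pi fun e => bern (p e)

/-- One oriented step: there is an edge between `a` and `b`, oriented from `a` to `b`
in the configuration `ω`. -/
def OStep {G : SimpleGraph V} (ω : EdgeIdx G → Bool) (a b : V) : Prop :=
  ∃ e : EdgeIdx G, (ω e = true ∧ e.1.1 = a ∧ e.1.2 = b) ∨ (ω e = false ∧ e.1.1 = b ∧ e.1.2 = a)

/-- `a ⇝ b` in configuration `ω`: `(a, b)` is in the reflexive transitive closure of
the oriented edge relation. -/
def Reaches {G : SimpleGraph V} (ω : EdgeIdx G → Bool) (a b : V) : Prop :=
  Relation.ReflTransGen (OStep ω) a b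

namespace PosAssocAux

open Finset

variable {V : Type*} [Fintype V] [LinearOrder V] {G : SimpleGraph V}

/-- Source of edge `e` under orientation `ω`. -/
def esrc (ω : EdgeIdx G → Bool) (e : EdgeIdx G) : V := if ω e then e.1.1 else e.1.2

/-- Destination of edge `e` under orientation `ω`. -/
def edst (ω : EdgeIdx G → Bool) (e : EdgeIdx G) : V := if ω e then e.1.2 else e.1.1

/-- One oriented step using only edges in `A`. -/
def step (A : Finset (EdgeIdx G)) (ω : EdgeIdx G → Bool) (a b : V) : Prop :=
  ∃ e ∈ A, esrc ω e = a ∧ edst ω e = b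

/-- `x` reaches the target set `T` using only edges in `A`. -/
def reach (A : Finset (EdgeIdx G)) (ω : EdgeIdx G → Bool) (T : Set V) (x : V) : Prop :=
  ∃ t ∈ T, Relation.ReflTransGen (step A ω) x t

noncomputable def chi (A : Finset (EdgeIdx G)) (ω : EdgeIdx G → Bool) (T : Set V) : V → Bool :=
  fun i => decide (reach A ω T i)

noncomputable def wt (p : EdgeIdx G → ℝ) (ω : EdgeIdx G → Bool) : ℝ :=
  ∏ e, (if ω e then p e else 1 - p e)

noncomputable def S (p : EdgeIdx G → ℝ) (A : Finset (EdgeIdx G)) (T : Set V)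
    (F : (V → Bool) → ℝ) : ℝ :=
  ∑ ω : EdgeIdx G → Bool, wt p ω * F (chi A ω T)

lemma wt_nonneg {p : EdgeIdx G → ℝ} (hp0 : ∀ e, 0 ≤ p e) (hp1 : ∀ e, p e ≤ 1)
    (ω : EdgeIdx G → Bool) : 0 ≤ wt p ω := by
  refine Finset.prod_nonneg fun e _ => ?_
  by_cases h : ω e <;> simp [h] <;> linarith [hp0 e, hp1 e]

lemma step_mono {A B : Finset (EdgeIdx G)} (hAB : A ⊆ B) {ω : EdgeIdx G → Bool} {a b : V}
    (h : step A ω a b) : step B ω a b := by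
  obtain ⟨e, he, hs⟩ := h; exact ⟨e, hAB he, hs⟩

lemma reach_mono_T {A : Finset (EdgeIdx G)} {ω : EdgeIdx G → Bool} {T T' : Set V}
    (hT : T ⊆ T') {x : V} (h : reach A ω T x) : reach A ω T' x := by
  obtain ⟨t, ht, hp⟩ := h; exact ⟨t, hT ht, hp⟩

lemma chi_le {A : Finset (EdgeIdx G)} {ω : EdgeIdx G → Bool} {T T' : Set V}
    (hT : T ⊆ T') : chi A ω T ≤ chi A ω T' := by
  intro i
  by_cases h : reach A ω T i
  · simp [chi, h, reach_mono_T hT h]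
  · simp [chi, h]

lemma S_mono {p : EdgeIdx G → ℝ} (hp0 : ∀ e, 0 ≤ p e) (hp1 : ∀ e, p e ≤ 1)
    {A : Finset (EdgeIdx G)} {T T' : Set V} (hT : T ⊆ T') {f : (V → Bool) → ℝ}
    (hf : Monotone f) : S p A T f ≤ S p A T' f := by
  refine Finset.sum_le_sum fun ω _ => ?_
  exact mul_le_mul_of_nonneg_left (hf (chi_le hT)) (wt_nonneg hp0 hp1 ω)

lemma step_congr {A : Finset (EdgeIdx G)} {ω ω' : EdgeIdx G → Bool}
    (h : ∀ e ∈ A, ω' e = ω e) {a b : V} : step A ω' a b ↔ step A ω a b := by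
  constructor <;> rintro ⟨e, he, hs, hd⟩ <;> refine ⟨e, he, ?_, ?_⟩ <;>
    simp [esrc, edst, h e he] at hs hd ⊢ <;> simp [← h e he] at * <;> tauto

lemma reach_congr {A : Finset (EdgeIdx G)} {ω ω' : EdgeIdx G → Bool}
    (h : ∀ e ∈ A, ω' e = ω e) {T : Set V} {x : V} : reach A ω' T x ↔ reach A ω T x := by
  constructor <;> rintro ⟨t, ht, hp⟩ <;> refine ⟨t, ht, Relation.ReflTransGen.mono (fun a b hs => ?_) _ _ hp⟩
  · exact (step_congr h).1 hs
  · exact (step_congr h).2 hs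

lemma chi_update {A : Finset (EdgeIdx G)} {e : EdgeIdx G} (he : e ∉ A)
    (ω : EdgeIdx G → Bool) (b : Bool) (T : Set V) :
    chi A (Function.update ω e b) T = chi A ω T := by
  funext i
  refine decide_eq_decide.mpr (reach_congr fun e' he' => ?_)
  exact Function.update_of_ne (by rintro rfl; exact he he') _ _

/-- Absorption: if the edge `e` is oriented into `T`, removing it and adding its source
to the target set does not change reachability. -/
lemma reach_absorb_in {A : Finset (EdgeIdx G)} {e : EdgeIdx G} (he : e ∈ A)
    {ω : EdgeIdx G → Bool} {T : Set V} (hd : edst ω e ∈ T) (x : V) :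
    reach A ω T x ↔ reach (A.erase e) ω (insert (esrc ω e) T) x := by
  constructor
  · rintro ⟨t, ht, hp⟩
    induction hp using Relation.ReflTransGen.head_induction_on with
    | refl => exact ⟨t, Set.mem_insert_of_mem _ ht, .refl⟩
    | head h' _ ih =>
      obtain ⟨e', he', hs, hd'⟩ := h'
      by_cases hee : e' = e
      · subst hee; exact ⟨_, hs ▸ Set.mem_insert _ _, .refl⟩
      · obtain ⟨t', ht', hp'⟩ := ih
        exact ⟨t', ht', hp'.head ⟨e', Finset.mem_erase.mpr ⟨hee, he'⟩, hs, hd'⟩⟩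
  · rintro ⟨t, ht, hp⟩
    have hp' : Relation.ReflTransGen (step A ω) x t :=
      Relation.ReflTransGen.mono (fun a b h => step_mono (Finset.erase_subset _ _) h) _ _ hp
    rcases Set.mem_insert_iff.mp ht with rfl | htT
    · exact ⟨edst ω e, hd, hp'.tail ⟨e, he, rfl, rfl⟩⟩
    · exact ⟨t, htT, hp'⟩

/-- If the edge `e` is oriented out of `T`, it is useless for reaching `T`. -/
lemma reach_absorb_out {A : Finset (EdgeIdx G)} {e : EdgeIdx G} (he : e ∈ A)
    {ω : EdgeIdx G → Bool} {T : Set V} (hs : esrc ω e ∈ T) (x : V) :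
    reach A ω T x ↔ reach (A.erase e) ω T x := by
  constructor
  · rintro ⟨t, ht, hp⟩
    induction hp using Relation.ReflTransGen.head_induction_on with
    | refl => exact ⟨t, ht, .refl⟩
    | head h' _ ih =>
      obtain ⟨e', he', hs', hd'⟩ := h'
      by_cases hee : e' = e
      · subst hee; exact ⟨_, hs' ▸ hs, .refl⟩
      · obtain ⟨t', ht', hp'⟩ := ih
        exact ⟨t', ht', hp'.head ⟨e', Finset.mem_erase.mpr ⟨hee, he'⟩, hs', hd'⟩⟩
  · rintro ⟨t, ht, hp⟩
    exact ⟨t, ht, Relation.ReflTransGen.mono (fun a b h => step_mono (Finset.erase_subset _ _) h) _ _ hp⟩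

/-- The rest of the weight, without the factor of `e`. -/
noncomputable def rest (p : EdgeIdx G → ℝ) (e : EdgeIdx G) (ω : EdgeIdx G → Bool) : ℝ :=
  ∏ e' ∈ Finset.univ.erase e, (if ω e' then p e' else 1 - p e')

lemma wt_eq (p : EdgeIdx G → ℝ) (e : EdgeIdx G) (ω : EdgeIdx G → Bool) :
    wt p ω = (if ω e then p e else 1 - p e) * rest p e ω :=
  (Finset.mul_prod_erase Finset.univ _ (Finset.mem_univ e)).symm

lemma rest_update (p : EdgeIdx G → ℝ) (e : EdgeIdx G) (ω : EdgeIdx G → Bool) (b : Bool) :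
    rest p e (Function.update ω e b) = rest p e ω := by
  refine Finset.prod_congr rfl fun e' he' => ?_
  rw [Function.update_of_ne (Finset.ne_of_mem_erase he')]

/-- Splitting the sum over the coordinate `e`. -/
lemma sum_split (p : EdgeIdx G → ℝ) (e : EdgeIdx G)
    (H1 H2 : (EdgeIdx G → Bool) → ℝ)
    (h1 : ∀ ω b, H1 (Function.update ω e b) = H1 ω)
    (h2 : ∀ ω b, H2 (Function.update ω e b) = H2 ω) :
    ∑ ω : EdgeIdx G → Bool, wt p ω * (if ω e then H1 ω else H2 ω)
      = p e * ∑ ω : EdgeIdx G → Bool, wt p ω * H1 ω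
        + (1 - p e) * ∑ ω : EdgeIdx G → Bool, wt p ω * H2 ω := by
  classical
  set σ := Equiv.funSplitAt e Bool with hσ
  have key : ∀ F : (EdgeIdx G → Bool) → ℝ,
      ∑ ω : EdgeIdx G → Bool, F ω
        = ∑ ρ : { j : EdgeIdx G // j ≠ e } → Bool,
            (F (σ.symm (true, ρ)) + F (σ.symm (false, ρ))) := by
    intro F
    rw [← Equiv.sum_comp σ.symm F, Fintype.sum_prod_type, Fintype.sum_bool,
      ← Finset.sum_add_distrib]
  have hsymm : ∀ (ρ : { j : EdgeIdx G // j ≠ e } → Bool) (b : Bool),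
      σ.symm (b, ρ) = Function.update (σ.symm (true, ρ)) e b := by
    intro ρ b
    funext j
    by_cases hj : j = e
    · subst hj; simp [hσ, Equiv.funSplitAt, Equiv.piSplitAt, Function.update_self]
    · simp [hσ, Equiv.funSplitAt, Equiv.piSplitAt, hj, Function.update_of_ne hj]
  have hval : ∀ (ρ : { j : EdgeIdx G // j ≠ e } → Bool), (σ.symm (true, ρ)) e = true := by
    intro ρ; simp [hσ, Equiv.funSplitAt, Equiv.piSplitAt]
  rw [key, key (fun ω => wt p ω * H1 ω), key (fun ω => wt p ω * H2 ω),
    Finset.mul_sum, Finset.mul_sum, ← Finset.sum_add_distrib]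
  refine Finset.sum_congr rfl fun ρ _ => ?_
  set ω1 := σ.symm (true, ρ) with hω1
  have h1e : ω1 e = true := hval ρ
  have h0 : σ.symm (false, ρ) = Function.update ω1 e false := hsymm ρ false
  have h0e : Function.update ω1 e false e = false := Function.update_self _ _ _
  rw [h0]
  rw [wt_eq p e ω1, wt_eq p e (Function.update ω1 e false), rest_update,
    h1e, h0e, h1 ω1 false, h2 ω1 false]
  simp only [Bool.false_eq_true, if_true, if_false]
  ring

/-- The two splitting identities for `S`. -/
lemma S_split_right {p : EdgeIdx G → ℝ} {A : Finset (EdgeIdx G)} {e : EdgeIdx G}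
    (he : e ∈ A) {T : Set V} (h2 : e.1.2 ∈ T) (F : (V → Bool) → ℝ) :
    S p A T F = p e * S p (A.erase e) (insert e.1.1 T) F
      + (1 - p e) * S p (A.erase e) T F := by
  have hpt : ∀ ω : EdgeIdx G → Bool,
      F (chi A ω T) = if ω e then F (chi (A.erase e) ω (insert e.1.1 T))
        else F (chi (A.erase e) ω T) := by
    intro ω
    by_cases hb : ω e
    · rw [if_pos hb]
      congr 1
      funext i
      refine decide_eq_decide.mpr ?_
      have hd : edst ω e ∈ T := by simpa [edst, hb] using h2
      have hs : esrc ω e = e.1.1 := by simp [esrc, hb]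
      rw [← hs]
      exact reach_absorb_in he hd i
    · rw [if_neg hb]
      congr 1
      funext i
      refine decide_eq_decide.mpr ?_
      have hs : esrc ω e ∈ T := by simpa [esrc, hb] using h2
      exact reach_absorb_out he hs i
  have : S p A T F = ∑ ω : EdgeIdx G → Bool,
      wt p ω * (if ω e then F (chi (A.erase e) ω (insert e.1.1 T))
        else F (chi (A.erase e) ω T)) := by
    refine Finset.sum_congr rfl fun ω _ => ?_
    rw [hpt ω]
  rw [this]
  exact sum_split p e _ _
    (fun ω b => by rw [chi_update (Finset.notMem_erase e A) ω b])
    (fun ω b => by rw [chi_update (Finset.notMem_erase e A) ω b])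

lemma S_split_left {p : EdgeIdx G → ℝ} {A : Finset (EdgeIdx G)} {e : EdgeIdx G}
    (he : e ∈ A) {T : Set V} (h1 : e.1.1 ∈ T) (F : (V → Bool) → ℝ) :
    S p A T F = (1 - p e) * S p (A.erase e) (insert e.1.2 T) F
      + p e * S p (A.erase e) T F := by
  have hpt : ∀ ω : EdgeIdx G → Bool,
      F (chi A ω T) = if ω e then F (chi (A.erase e) ω T)
        else F (chi (A.erase e) ω (insert e.1.2 T)) := by
    intro ω
    by_cases hb : ω e
    · rw [if_pos hb]
      congr 1
      funext i
      refine decide_eq_decide.mpr ?_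
      have hs : esrc ω e ∈ T := by simpa [esrc, hb] using h1
      exact reach_absorb_out he hs i
    · rw [if_neg hb]
      congr 1
      funext i
      refine decide_eq_decide.mpr ?_
      have hd : edst ω e ∈ T := by simpa [edst, hb] using h1
      have hs : esrc ω e = e.1.2 := by simp [esrc, hb]
      rw [← hs]
      exact reach_absorb_in he hd i
  have : S p A T F = ∑ ω : EdgeIdx G → Bool,
      wt p ω * (if ω e then F (chi (A.erase e) ω T)
        else F (chi (A.erase e) ω (insert e.1.2 T))) := by
    refine Finset.sum_congr rfl fun ω _ => ?_
    rw [hpt ω]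
  rw [this]
  rw [sum_split p e _ _
    (fun ω b => by rw [chi_update (Finset.notMem_erase e A) ω b])
    (fun ω b => by rw [chi_update (Finset.notMem_erase e A) ω b])]
  simp only [S]
  ring

lemma key_ineq {q q' X1 X0 x1 x0 y1 y0 : ℝ} (hq0 : 0 ≤ q) (hq'0 : 0 ≤ q')
    (hqq : q + q' = 1) (hX1 : X1 ≥ x1 * y1) (hX0 : X0 ≥ x0 * y0)
    (hx : x0 ≤ x1) (hy : y0 ≤ y1) :
    q * X1 + q' * X0 ≥ (q * x1 + q' * x0) * (q * y1 + q' * y0) := by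
  have hq' : q' = 1 - q := by linarith
  subst hq'
  nlinarith [mul_nonneg (mul_nonneg hq0 hq'0) (mul_nonneg (sub_nonneg.2 hx) (sub_nonneg.2 hy)),
    mul_nonneg hq0 (sub_nonneg.2 hX1), mul_nonneg hq'0 (sub_nonneg.2 hX0)]

lemma sum_wt {p : EdgeIdx G → ℝ} : ∑ ω : EdgeIdx G → Bool, wt p ω = 1 := by
  classical
  have h : ∑ ω : EdgeIdx G → Bool, wt p ω
      = ∏ e : EdgeIdx G, ∑ b : Bool, (if b then p e else 1 - p e) := by
    rw [← Finset.sum_prod_piFinset (Finset.univ : Finset Bool)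
      (fun (e : EdgeIdx G) (b : Bool) => if b then p e else 1 - p e),
      Fintype.piFinset_univ]
    rfl
  rw [h]
  refine Finset.prod_eq_one fun e _ => by simp

/-- In the absence of edges incident to `T`, the reachable set is `T` itself. -/
lemma chi_of_no_incident {A : Finset (EdgeIdx G)} {T : Set V}
    (hE : ∀ e ∈ A, e.1.1 ∉ T ∧ e.1.2 ∉ T) (ω : EdgeIdx G → Bool) :
    chi A ω T = fun i => decide (i ∈ T) := by
  funext i
  refine decide_eq_decide.mpr ⟨?_, fun h => ⟨i, h, .refl⟩⟩
  rintro ⟨t, ht, hp⟩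
  induction hp using Relation.ReflTransGen.head_induction_on with
  | refl => exact ht
  | head h' _ ih =>
    obtain ⟨e', he', hs', hd'⟩ := h'
    exfalso
    have hdT : edst ω e' ∈ T := hd' ▸ ih
    by_cases hb : ω e'
    · exact (hE e' he').2 (by simpa [edst, hb] using hdT)
    · exact (hE e' he').1 (by simpa [edst, hb] using hdT)

/-- The main induction: positive association of `S`. -/
lemma S_PA {p : EdgeIdx G → ℝ} (hp0 : ∀ e, 0 ≤ p e) (hp1 : ∀ e, p e ≤ 1)
    (A : Finset (EdgeIdx G)) :
    ∀ (T : Set V) (f g : (V → Bool) → ℝ), Monotone f → Monotone g →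
      S p A T (fun x => f x * g x) ≥ S p A T f * S p A T g := by
  classical
  induction A using Finset.strongInduction with
  | _ A ih =>
    intro T f g hf hg
    by_cases hE : ∃ e ∈ A, e.1.1 ∈ T ∨ e.1.2 ∈ T
    · obtain ⟨e, he, hinc⟩ := hE
      have hsub : A.erase e ⊂ A := Finset.erase_ssubset he
      by_cases h2 : e.1.2 ∈ T
      · rw [S_split_right he h2 (fun x => f x * g x), S_split_right he h2 f,
          S_split_right he h2 g]
        exact key_ineq (hp0 e) (by linarith [hp1 e]) (by ring)
          (ih _ hsub _ f g hf hg) (ih _ hsub _ f g hf hg)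
          (S_mono hp0 hp1 (Set.subset_insert _ _) hf)
          (S_mono hp0 hp1 (Set.subset_insert _ _) hg)
      · have h1 : e.1.1 ∈ T := hinc.resolve_right h2
        rw [S_split_left he h1 (fun x => f x * g x), S_split_left he h1 f,
          S_split_left he h1 g]
        exact key_ineq (by linarith [hp1 e]) (hp0 e) (by ring)
          (ih _ hsub _ f g hf hg) (ih _ hsub _ f g hf hg)
          (S_mono hp0 hp1 (Set.subset_insert _ _) hf)
          (S_mono hp0 hp1 (Set.subset_insert _ _) hg)
    · push_neg at hE
      have hchi : ∀ ω : EdgeIdx G → Bool, chi A ω T = fun i => decide (i ∈ T) :=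
        chi_of_no_incident hE
      have hS : ∀ F : (V → Bool) → ℝ, S p A T F = F (fun i => decide (i ∈ T)) := by
        intro F
        unfold S
        simp only [hchi]
        rw [← Finset.sum_mul, sum_wt, one_mul]
      rw [hS, hS, hS]

end PosAssocAux

/-- **Corollary (positive association towards a target set).**
If the edges of a finite graph are independently oriented (edge `e` oriented
upwards with arbitrary probability `p e ∈ [0,1]`), then for any target set `T`,
the events `{i ⇝ T}`, `i ∈ V`, are positively associated. -/
theorem positivelyAssociated_reaches_to_target
    (G : SimpleGraph V) (p : EdgeIdx G → ℝ)
    (hp0 : ∀ e, 0 ≤ p e) (hp1 : ∀ e, p e ≤ 1) (T : Set V) :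
    PositivelyAssociated (orientationMeasure G p)
      (fun i : V => {ω : EdgeIdx G → Bool | ∃ t ∈ T, Reaches ω i t}) := by
  classical
  intro f g _ _ _ _ hf hg
  beta_reduce
  have hdec : ∀ (ω : EdgeIdx G → Bool) (i : V),
      @decide (ω ∈ {ω' : EdgeIdx G → Bool | ∃ t ∈ T, Reaches ω' i t})
        (Classical.propDecidable _)
      = decide (ω ∈ {ω' : EdgeIdx G → Bool | ∃ t ∈ T, Reaches ω' i t}) :=
    fun ω i => decide_eq_decide.mpr Iff.rfl
  simp only [hdec]
  haveI : ∀ e : EdgeIdx G, IsProbabilityMeasure (bern (p e)) := by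
    intro e
    constructor
    have h1 : (0:ℝ) ≤ 1 - p e := by linarith [hp1 e]
    simp [bern, Measure.dirac_apply, ← ENNReal.ofReal_add (hp0 e) h1]
  haveI : IsProbabilityMeasure (orientationMeasure G p) :=
    MeasureTheory.Measure.pi.instIsProbabilityMeasure _
  have hsing : ∀ ω : EdgeIdx G → Bool,
      ((orientationMeasure G p) {ω}).toReal = PosAssocAux.wt p ω := by
    intro ω
    have h1 : ({ω} : Set (EdgeIdx G → Bool)) = Set.univ.pi fun e => {ω e} :=
      (Set.univ_pi_singleton ω).symm
    rw [h1, orientationMeasure, MeasureTheory.Measure.pi_pi, ENNReal.toReal_prod]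
    refine Finset.prod_congr rfl fun e _ => ?_
    by_cases hb : ω e
    · rw [hb]; simp [bern, Measure.dirac_apply, ENNReal.toReal_ofReal (hp0 e)]
    · simp only [Bool.not_eq_true] at hb
      rw [hb]
      have h1 : (0:ℝ) ≤ 1 - p e := by linarith [hp1 e]
      simp [bern, Measure.dirac_apply, ENNReal.toReal_ofReal h1]
  have hchi : ∀ (ω : EdgeIdx G → Bool) (i : V),
      (decide (ω ∈ {ω' : EdgeIdx G → Bool | ∃ t ∈ T, Reaches ω' i t}) : Bool)
        = PosAssocAux.chi Finset.univ ω T i := by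
    intro ω i
    refine decide_eq_decide.mpr ?_
    simp only [Set.mem_setOf_eq, PosAssocAux.reach]
    constructor <;> rintro ⟨t, ht, hp⟩ <;> refine ⟨t, ht, Relation.ReflTransGen.mono (fun a b h => ?_) _ _ hp⟩
    · obtain ⟨e, he⟩ := h
      refine ⟨e, Finset.mem_univ e, ?_⟩
      rcases he with ⟨h1, h2, h3⟩ | ⟨h1, h2, h3⟩ <;>
        simp [PosAssocAux.esrc, PosAssocAux.edst, h1, h2, h3]
    · obtain ⟨e, _, h2, h3⟩ := h
      refine ⟨e, ?_⟩
      by_cases hb : ω e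
      · left
        simp [PosAssocAux.esrc, PosAssocAux.edst, hb] at h2 h3
        exact ⟨hb, h2, h3⟩
      · right
        simp only [Bool.not_eq_true] at hb
        simp [PosAssocAux.esrc, PosAssocAux.edst, hb] at h2 h3
        exact ⟨hb, h3, h2⟩
  have conv : ∀ h : (V → Bool) → ℝ,
      (∫ ω, h (fun i => decide (ω ∈ {ω' : EdgeIdx G → Bool | ∃ t ∈ T, Reaches ω' i t}))
          ∂(orientationMeasure G p))
        = PosAssocAux.S p Finset.univ T h := by
    intro h
    rw [MeasureTheory.integral_fintype (MeasureTheory.Integrable.of_finite)]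
    refine Finset.sum_congr rfl fun ω _ => ?_
    rw [smul_eq_mul, Measure.real, hsing ω]
    congr 1
    congr 1
    funext i
    exact hchi ω i
  have h1 := conv f
  have h2 := conv g
  have h3 : (∫ ω, f (fun i => decide (ω ∈ {ω' : EdgeIdx G → Bool | ∃ t ∈ T, Reaches ω' i t}))
        * g (fun i => decide (ω ∈ {ω' : EdgeIdx G → Bool | ∃ t ∈ T, Reaches ω' i t}))
        ∂(orientationMeasure G p))
      = PosAssocAux.S p Finset.univ T (fun x => f x * g x) := conv (fun x => f x * g x)
  rw [h1, h2, h3]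
  exact PosAssocAux.S_PA hp0 hp1 Finset.univ T f g hf hg
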